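/- The realizability transformation preserves provability: given axioms Φ, if e : [∀x̄.] A1,...,Am ⇒ B is derivable with e in β-normal form (so e is a constant κ or of the form λā.n with n first-order normal), then the transformed judgment is derivable from F(Φ): namely e : [∀x̄∀ȳ.] A1[y1],...,Am[ym] ⇒ B[t] with y1,...,ym fresh and distinct, where t = f_κ(y1,...,ym) if e = κ, and t = ⟦n⟧_{[ȳ/ā]} if e = λā.n. -/

import Mathlib

namespace SRes

/-- First-order terms: variables and function symbols applied to lists of terms. -/
inductive Tm : Type where
  | var : ℕ → Tm
  | fn : ℕ → List Tm → Tm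

/-- First-order substitutions. -/
abbrev Subst := ℕ → Tm

/-- Applying a substitution to a term. -/
def Tm.subst (σ : Subst) : Tm → Tm
  | .var x => σ x
  | .fn f ts => .fn f (ts.attach.map (fun t => Tm.subst σ t.1))
decreasing_by
  have := List.sizeOf_lt_of_mem t.2
  simp only [Tm.fn.sizeOf_spec]
  omega

/-- The identity substitution. -/
def Subst.id : Subst := Tm.var

/-- Composition of substitutions: `(Subst.comp θ γ) x = θ(γ(x))`. -/
def Subst.comp (θ γ : Subst) : Subst := fun x => (γ x).subst θ

/-- Free variables of a term. -/
def Tm.fv : Tm → Finset ℕ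
  | .var x => {x}
  | .fn _ ts => (ts.attach.map (fun t => Tm.fv t.1)).foldr (· ∪ ·) ∅
decreasing_by
  have := List.sizeOf_lt_of_mem t.2
  simp only [Tm.fn.sizeOf_spec]
  omega

/-- Function symbols occurring in a term. -/
def Tm.fns : Tm → Finset ℕ
  | .var _ => ∅
  | .fn f ts => insert f ((ts.attach.map (fun t => Tm.fns t.1)).foldr (· ∪ ·) ∅)
decreasing_by
  have := List.sizeOf_lt_of_mem t.2
  simp only [Tm.fn.sizeOf_spec]
  omega

/-- Atomic formulas `P(t1,...,tn)`. -/
structure Atom : Type where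
  pred : ℕ
  args : List Tm

def Atom.subst (σ : Subst) (A : Atom) : Atom := ⟨A.pred, A.args.map (Tm.subst σ)⟩

def Atom.fv (A : Atom) : Finset ℕ := (A.args.map Tm.fv).foldr (· ∪ ·) ∅

def Atom.fns (A : Atom) : Finset ℕ := (A.args.map Tm.fns).foldr (· ∪ ·) ∅

/-- Renaming the variables of an atom. -/
def Atom.rename (ρ : ℕ → ℕ) (A : Atom) : Atom := A.subst (fun x => .var (ρ x))

/-- `A.ext t'` is `A[t']`: add `t'` as an extra last argument of `A`. -/
def Atom.ext (A : Atom) (t : Tm) : Atom := ⟨A.pred, A.args ++ [t]⟩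

def listFV (As : List Atom) : Finset ℕ := (As.map Atom.fv).foldr (· ∪ ·) ∅

def listFns (As : List Atom) : Finset ℕ := (As.map Atom.fns).foldr (· ∪ ·) ∅

/-- Free variables of a multiset of atoms. -/
def mFV (G : Multiset Atom) : Finset ℕ := (G.map Atom.fv).sup

/-- A logic program: a finite list of axioms `κ : ∀x̄. body ⇒ head`
(each axiom is implicitly universally closed). -/
abbrev Prog := List (ℕ × List Atom × Atom)

def progFns (Φ : Prog) : Finset ℕ :=
  (Φ.map (fun r => r.2.2.fns ∪ listFns r.2.1)).foldr (· ∪ ·) ∅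

/-! ### Proof terms (de Bruijn representation for bound proof variables) -/

inductive Pf : Type where
  | const : ℕ → Pf           -- proof-term constants κ
  | bvar : ℕ → Pf            -- proof-term variables a (de Bruijn)
  | lam : Pf → Pf            -- λa.e
  | app : Pf → Pf → Pf       -- e e'

/-- Lift de Bruijn indices `≥ c` by `d`. -/
def Pf.lift (c d : ℕ) : Pf → Pf
  | .const k => .const k
  | .bvar i => if i < c then .bvar i else .bvar (i + d)
  | .lam p => .lam (p.lift (c+1) d)
  | .app p q => .app (p.lift c d) (q.lift c d)

/-- Substitute `q` for de Bruijn index `k` in a proof term. -/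
def Pf.subst (k : ℕ) (q : Pf) : Pf → Pf
  | .const c => .const c
  | .bvar i => if i < k then .bvar i else if i = k then q.lift 0 k else .bvar (i - 1)
  | .lam p => .lam (Pf.subst (k+1) q p)
  | .app p p' => .app (Pf.subst k q p) (Pf.subst k q p')

/-- Beta-reduction on proof terms: congruence closure of `(λa.p) p' →β [p'/a]p`. -/
inductive Beta : Pf → Pf → Prop where
  | beta (p q : Pf) : Beta (.app (.lam p) q) (p.subst 0 q)
  | appL {p p' q : Pf} : Beta p p' → Beta (.app p q) (.app p' q)
  | appR {p q q' : Pf} : Beta q q' → Beta (.app p q) (.app p q')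
  | lam {p p' : Pf} : Beta p p' → Beta (.lam p) (.lam p')

/-- A proof term is strongly normalizing if every β-reduction sequence from it is finite. -/
def Pf.SN (p : Pf) : Prop := Acc (fun a b => Beta b a) p

/-- β-normal proof terms. -/
def Pf.Normal (p : Pf) : Prop := ∀ q, ¬ Beta p q

/-- First-order proof terms: built from constants and variables by application only. -/
inductive Pf.FirstOrder : Pf → Prop where
  | const (κ : ℕ) : Pf.FirstOrder (.const κ)
  | bvar (a : ℕ) : Pf.FirstOrder (.bvar a)
  | app {p q : Pf} : Pf.FirstOrder p → Pf.FirstOrder q → Pf.FirstOrder (.app p q)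

/-- `Pf.lams k p` is `λa1...λak. p`. -/
def Pf.lams : ℕ → Pf → Pf
  | 0, p => p
  | n+1, p => .lam (Pf.lams n p)

/-- Apply a proof term to a list of proof terms, left associated. -/
def Pf.apps (p : Pf) : List Pf → Pf
  | [] => p
  | q :: qs => Pf.apps (.app p q) qs

/-- The proof term `λā.λb̄.(e2 b̄)(e1 ā)` produced by the cut rule
(`n` is the length of `ā`, `m` the length of `b̄`). -/
def cutTerm (n m : ℕ) (e₁ e₂ : Pf) : Pf :=
  Pf.lams (n + m) <|
    .app (Pf.apps (e₂.lift 0 (n+m)) ((List.range m).map (fun j => Pf.bvar (m - 1 - j))))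
         (Pf.apps (e₁.lift 0 (n+m)) ((List.range n).map (fun j => Pf.bvar (n + m - 1 - j))))

/-! ### Horn formulas as types -/

/-- Horn formulas `A1,...,An ⇒ B`, either unquantified (`horn`)
or universally closed over all their free term variables (`all`). -/
inductive Formula : Type where
  | horn : List Atom → Atom → Formula
  | all : List Atom → Atom → Formula

/-- The Horn-formulas-as-types typing judgment `e : F` relative to a program `Φ`. -/
inductive Derives (Φ : Prog) : Pf → Formula → Prop where
  | ax {κ : ℕ} {body : List Atom} {head : Atom} :
      (κ, body, head) ∈ Φ → Derives Φ (.const κ) (.all body head)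
  | gen {e : Pf} {body : List Atom} {head : Atom} :
      Derives Φ e (.horn body head) → Derives Φ e (.all body head)
  | inst {e : Pf} {body : List Atom} {head : Atom} (σ : Subst) :
      Derives Φ e (.all body head) →
      Derives Φ e (.horn (body.map (Atom.subst σ)) (head.subst σ))
  | cut {e₁ e₂ : Pf} {As Bs : List Atom} {D C : Atom} :
      Derives Φ e₁ (.horn As D) → Derives Φ e₂ (.horn (Bs ++ [D]) C) →
      Derives Φ (cutTerm As.length Bs.length e₁ e₂) (.horn (As ++ Bs) C)

/-! ### Reductions -/

def Unifies (γ : Subst) (A B : Atom) : Prop := A.subst γ = B.subst γ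

/-- `γ` is a most general unifier of `A` and `B`. -/
def IsMGU (γ : Subst) (A B : Atom) : Prop :=
  Unifies γ A B ∧ ∀ δ, Unifies δ A B → ∃ θ, δ = Subst.comp θ γ

/-- `(body, head)` is a freshly renamed copy of the axiom `κ` of `Φ`,
whose variables do not occur in the goal multiset `G`. -/
def FreshRuleFor (Φ : Prog) (κ : ℕ) (G : Multiset Atom)
    (body : List Atom) (head : Atom) : Prop :=
  ∃ (body₀ : List Atom) (head₀ : Atom) (ρ : ℕ → ℕ),
    (κ, body₀, head₀) ∈ Φ ∧ Function.Injective ρ ∧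
    body = body₀.map (Atom.rename ρ) ∧ head = head₀.rename ρ ∧
    Disjoint (listFV body ∪ head.fv) (mFV G)

/-- Term-matching (LP-TM) reduction step via axiom `κ`:
replace `Ai = σC` by `σB1,...,σBm`. -/
def TMStep (Φ : Prog) (κ : ℕ) (G G' : Multiset Atom) : Prop :=
  ∃ (body : List Atom) (head : Atom) (σ : Subst) (rest : Multiset Atom),
    (κ, body, head) ∈ Φ ∧ G = (head.subst σ) ::ₘ rest ∧
    G' = ↑(body.map (Atom.subst σ)) + rest

def TMred (Φ : Prog) (G G' : Multiset Atom) : Prop := ∃ κ, TMStep Φ κ G G'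

/-- `G` is in term-matching normal form. -/
def TMNF (Φ : Prog) (G : Multiset Atom) : Prop := ∀ G', ¬ TMred Φ G G'

/-- `Φ` is productive: every term-matching reduction sequence is finite. -/
def Productive (Φ : Prog) : Prop := ∀ G, Acc (fun a b => TMred Φ b a) G

/-- Unification (LP-Unif) reduction step via axiom `κ` with most general unifier `γ`. -/
def UnifStepL (Φ : Prog) (κ : ℕ) (γ : Subst) (G G' : Multiset Atom) : Prop :=
  ∃ (A : Atom) (rest : Multiset Atom) (body : List Atom) (head : Atom),
    G = A ::ₘ rest ∧ FreshRuleFor Φ κ G body head ∧ IsMGU γ head A ∧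
    G' = ↑(body.map (Atom.subst γ)) + rest.map (Atom.subst γ)

/-- Substitutional reduction step via axiom `κ` with most general unifier `γ`. -/
def SubStepL (Φ : Prog) (κ : ℕ) (γ : Subst) (G G' : Multiset Atom) : Prop :=
  ∃ (A : Atom) (rest : Multiset Atom) (body : List Atom) (head : Atom),
    G = A ::ₘ rest ∧ FreshRuleFor Φ κ G body head ∧ IsMGU γ head A ∧
    G' = G.map (Atom.subst γ)

/-- Stateful LP-Unif reduction on pairs (goal multiset, accumulated substitution). -/
def unifR (Φ : Prog) (p q : Multiset Atom × Subst) : Prop :=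
  ∃ κ γ, UnifStepL Φ κ γ p.1 q.1 ∧ q.2 = Subst.comp γ p.2

/-- Stateful LP-Struct reduction `→^μ·↪^1`: term-matching reduce to `→`-normal form,
then perform at most one substitutional step. -/
def structR (Φ : Prog) (p q : Multiset Atom × Subst) : Prop :=
  ∃ G', Relation.ReflTransGen (TMred Φ) p.1 G' ∧ TMNF Φ G' ∧
    ((q.1 = G' ∧ q.2 = p.2) ∨ ∃ κ γ, SubStepL Φ κ γ G' q.1 ∧ q.2 = Subst.comp γ p.2)

/-- A multiset of queries succeeds by LP-Unif reduction. -/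
def UnifSucc (Φ : Prog) (G : Multiset Atom) : Prop :=
  ∃ γ, Relation.ReflTransGen (unifR Φ) (G, Subst.id) (0, γ)

/-- A multiset of queries succeeds by LP-Struct reduction. -/
def StructSucc (Φ : Prog) (G : Multiset Atom) : Prop :=
  ∃ γ, Relation.ReflTransGen (structR Φ) (G, Subst.id) (0, γ)

/-- `Φ` is non-overlapping: heads of distinct axioms have no common instance. -/
def NonOverlapping (Φ : Prog) : Prop :=
  ∀ κ body head κ' body' head', (κ, body, head) ∈ Φ → (κ', body', head') ∈ Φ → κ ≠ κ' →
    ∀ σ δ : Subst, head.subst σ ≠ head'.subst δ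

/-! ### Realizability transformation -/

def ruleFV (body : List Atom) (head : Atom) : Finset ℕ := listFV body ∪ head.fv

/-- `extBody [A1,...,Am] [y1,...,ym] = [A1[y1],...,Am[ym]]`. -/
def extBody (As : List Atom) (ys : List ℕ) : List Atom :=
  List.zipWith (fun A y => A.ext (Tm.var y)) As ys

/-- Realizability transformation of a single axiom `κ : ∀x̄. A1,...,Am ⇒ B`
into `κ : ∀x̄∀ȳ. A1[y1],...,Am[ym] ⇒ B[f_κ(y1,...,ym)]` with fresh distinct `ȳ`. -/
def transRule (fsym : ℕ → ℕ) (κ : ℕ) (body : List Atom) (head : Atom) : List Atom × Atom :=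
  let N := (ruleFV body head).sup id + 1
  let ys := (List.range body.length).map (fun i => N + i)
  (extBody body ys, head.ext (.fn (fsym κ) (ys.map Tm.var)))

/-- The realizability transformation `F(Φ)`. -/
def transProg (fsym : ℕ → ℕ) (Φ : Prog) : Prog :=
  Φ.map (fun r => (r.1, transRule fsym r.1 r.2.1 r.2.2))

/-- `fsym` assigns a fresh function symbol `f_κ` to each proof-term constant `κ`. -/
def FreshSyms (fsym : ℕ → ℕ) (Φ : Prog) : Prop :=
  Function.Injective fsym ∧ ∀ κ, fsym κ ∉ progFns Φ

/-- The representation `⟦·⟧_φ` of first-order normal proof terms as first-order terms: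
`⟦a⟧_φ = φ(a)` and `⟦κ p1 ... pn⟧_φ = f_κ(⟦p1⟧_φ,...,⟦pn⟧_φ)`. -/
inductive PfRep (fsym : ℕ → ℕ) (φ : ℕ → Tm) : Pf → Tm → Prop where
  | bvar (a : ℕ) : PfRep fsym φ (.bvar a) (φ a)
  | app (κ : ℕ) (ps : List Pf) (ts : List Tm) (hlen : ps.length = ts.length)
      (h : ∀ pt ∈ ps.zip ts, PfRep fsym φ pt.1 pt.2) :
      PfRep fsym φ (Pf.apps (.const κ) ps) (.fn (fsym κ) ts)

/-- The map `[ȳ/ā]` sending the bound proof variables `a1,...,ak` (de Bruijn) of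
`λa1...ak.n` to the first-order variables `y1,...,yk`. -/
def mkPhi (ys : List ℕ) : ℕ → Tm := fun j => Tm.var (ys.getD (ys.length - 1 - j) 0)


/-! ### Auxiliary lemmas -/

theorem mem_foldr_union {x : ℕ} {l : List (Finset ℕ)} :
    x ∈ l.foldr (· ∪ ·) ∅ ↔ ∃ s ∈ l, x ∈ s := by
  induction l with
  | nil => simp
  | cons a l ih => simp [ih]

theorem Tm.ind (P : Tm → Prop) (hv : ∀ x, P (.var x))
    (hf : ∀ f ts, (∀ t ∈ ts, P t) → P (.fn f ts)) : ∀ t, P t := by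
  intro t
  induction t using Tm.subst.induct with
  | case1 x => exact hv x
  | case2 f ts ih => exact hf f ts (fun t ht => ih ⟨t, ht⟩)

theorem Tm.subst_fn (σ : Subst) (f : ℕ) (ts : List Tm) :
    Tm.subst σ (.fn f ts) = .fn f (ts.map (Tm.subst σ)) := by
  rw [Tm.subst]
  congr 1
  rw [List.map_attach_eq_pmap]
  simp

theorem Tm.fv_fn (f : ℕ) (ts : List Tm) :
    Tm.fv (.fn f ts) = (ts.map Tm.fv).foldr (· ∪ ·) ∅ := by
  rw [Tm.fv]
  congr 1
  rw [List.map_attach_eq_pmap]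
  simp

theorem Tm.subst_congr {σ σ' : Subst} : ∀ {t : Tm}, (∀ x ∈ t.fv, σ x = σ' x) →
    t.subst σ = t.subst σ' := by
  intro t
  induction t using Tm.ind with
  | hv x => intro h; simp only [Tm.subst]; exact h x (by simp [Tm.fv])
  | hf f ts ih =>
    intro h
    rw [Tm.subst_fn, Tm.subst_fn]
    congr 1
    refine List.map_congr_left (fun t ht => ih t ht (fun x hx => h x ?_))
    rw [Tm.fv_fn, mem_foldr_union]
    exact ⟨t.fv, List.mem_map_of_mem ht, hx⟩

theorem Tm.subst_id : ∀ (t : Tm), t.subst Subst.id = t := by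
  intro t
  induction t using Tm.ind with
  | hv x => simp [Tm.subst, Subst.id]
  | hf f ts ih =>
    rw [Tm.subst_fn]
    congr 1
    conv_rhs => rw [← List.map_id ts]
    exact List.map_congr_left (fun t ht => ih t ht)

theorem Atom.mem_fv {x : ℕ} {A : Atom} : x ∈ A.fv ↔ ∃ t ∈ A.args, x ∈ t.fv := by
  unfold Atom.fv
  rw [mem_foldr_union]
  constructor
  · rintro ⟨s, hs, hx⟩
    obtain ⟨t, ht, rfl⟩ := List.mem_map.1 hs
    exact ⟨t, ht, hx⟩
  · rintro ⟨t, ht, hx⟩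
    exact ⟨t.fv, List.mem_map_of_mem ht, hx⟩

theorem Atom.subst_congr {σ σ' : Subst} {A : Atom} (h : ∀ x ∈ A.fv, σ x = σ' x) :
    A.subst σ = A.subst σ' := by
  unfold Atom.subst
  congr 1
  exact List.map_congr_left (fun t ht => Tm.subst_congr
    (fun x hx => h x (Atom.mem_fv.2 ⟨t, ht, hx⟩)))

theorem Atom.subst_id (A : Atom) : A.subst Subst.id = A := by
  unfold Atom.subst
  conv_rhs => rw [show A = ⟨A.pred, A.args⟩ from rfl]
  congr 1
  conv_rhs => rw [← List.map_id A.args]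
  exact List.map_congr_left (fun t _ => Tm.subst_id t)

theorem Atom.subst_ext (σ : Subst) (A : Atom) (t : Tm) :
    (A.ext t).subst σ = (A.subst σ).ext (t.subst σ) := by
  simp [Atom.ext, Atom.subst]

theorem mem_listFV {x : ℕ} {As : List Atom} {A : Atom} (hA : A ∈ As) (hx : x ∈ A.fv) :
    x ∈ listFV As := by
  unfold listFV
  rw [mem_foldr_union]
  exact ⟨A.fv, List.mem_map_of_mem hA, hx⟩

/-! #### Proof-term auxiliary lemmas -/

/-- All free de Bruijn variables are `< k`. -/
def Pf.FVB : ℕ → Pf → Prop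
  | _, .const _ => True
  | k, .bvar a => a < k
  | k, .lam p => Pf.FVB (k+1) p
  | k, .app p q => Pf.FVB k p ∧ Pf.FVB k q

theorem Pf.FVB.mono : ∀ {p : Pf} {k k' : ℕ}, Pf.FVB k p → k ≤ k' → Pf.FVB k' p := by
  intro p
  induction p with
  | const c => intro k k' h hk; trivial
  | bvar a => intro k k' h hk; exact lt_of_lt_of_le h hk
  | lam p ih => intro k k' h hk; exact ih h (by omega)
  | app p q ihp ihq => intro k k' h hk; exact ⟨ihp h.1 hk, ihq h.2 hk⟩

theorem Pf.lift_eq_of_FVB : ∀ {p : Pf} {c : ℕ}, Pf.FVB c p → ∀ d, p.lift c d = p := by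
  intro p
  induction p with
  | const c => intro c h d; rfl
  | bvar a => intro c h d; simp only [Pf.FVB] at h; simp only [Pf.lift, if_pos h]
  | lam p ih => intro c h d; simp only [Pf.lift]; rw [ih h]
  | app p q ihp ihq => intro c h d; simp only [Pf.lift]; rw [ihp h.1, ihq h.2]

theorem Pf.apps_append (p : Pf) (l₁ l₂ : List Pf) :
    Pf.apps p (l₁ ++ l₂) = Pf.apps (Pf.apps p l₁) l₂ := by
  induction l₁ generalizing p with
  | nil => rfl
  | cons q qs ih => simp only [List.cons_append, Pf.apps]; exact ih _

theorem Pf.FirstOrder.apps {p : Pf} {l : List Pf} (hp : p.FirstOrder)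
    (hl : ∀ q ∈ l, Pf.FirstOrder q) : Pf.FirstOrder (Pf.apps p l) := by
  induction l generalizing p with
  | nil => exact hp
  | cons q qs ih =>
    exact ih (hp.app (hl q (by simp))) (fun r hr => hl r (by simp [hr]))

theorem Pf.FVB.apps {p : Pf} {l : List Pf} {k : ℕ} (hp : Pf.FVB k p)
    (hl : ∀ q ∈ l, Pf.FVB k q) : Pf.FVB k (Pf.apps p l) := by
  induction l generalizing p with
  | nil => exact hp
  | cons q qs ih =>
    exact ih ⟨hp, hl q (by simp)⟩ (fun r hr => hl r (by simp [hr]))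

/-! Normality lemmas -/

theorem Pf.Normal.of_lams {k : ℕ} {p : Pf} (h : Pf.Normal (Pf.lams k p)) : Pf.Normal p := by
  induction k with
  | zero => exact h
  | succ n ih =>
    refine ih (fun q hq => ?_)
    exact h (.lam q) (Beta.lam hq)

theorem Pf.Normal.of_app {p q : Pf} (h : Pf.Normal (.app p q)) :
    Pf.Normal p ∧ Pf.Normal q ∧ ∀ r, p ≠ .lam r := by
  refine ⟨fun p' hp' => h _ (Beta.appL hp'), fun q' hq' => h _ (Beta.appR hq'), ?_⟩
  rintro r rfl
  exact h _ (Beta.beta r q)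

theorem Pf.Normal.of_apps {p : Pf} {l : List Pf} (h : Pf.Normal (Pf.apps p l)) :
    Pf.Normal p := by
  induction l generalizing p with
  | nil => exact h
  | cons q qs ih => exact (ih h).of_app.1

theorem Pf.Normal.of_apps_cons {p : Pf} {q : Pf} {l : List Pf}
    (h : Pf.Normal (Pf.apps p (q :: l))) : ∀ r, p ≠ .lam r := by
  have : Pf.Normal (.app p q) := (Pf.Normal.of_apps (p := .app p q) (l := l) h)
  exact this.of_app.2.2

theorem Beta.lift {p q : Pf} (h : Beta p q) : ∀ c d, ∃ r, Beta (p.lift c d) r := by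
  induction h with
  | beta p q =>
    intro c d
    exact ⟨_, Beta.beta (p.lift (c+1) d) (q.lift c d)⟩
  | appL h ih =>
    intro c d
    obtain ⟨r, hr⟩ := ih c d
    exact ⟨_, Beta.appL hr⟩
  | appR h ih =>
    intro c d
    obtain ⟨r, hr⟩ := ih c d
    exact ⟨_, Beta.appR hr⟩
  | lam h ih =>
    intro c d
    obtain ⟨r, hr⟩ := ih (c+1) d
    exact ⟨_, Beta.lam hr⟩

theorem Pf.Normal.of_lift {p : Pf} {c d : ℕ} (h : Pf.Normal (p.lift c d)) : Pf.Normal p := by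
  intro q hq
  obtain ⟨r, hr⟩ := hq.lift c d
  exact h r hr

theorem Pf.lift_lam {p : Pf} {c d : ℕ} {r : Pf} (h : p.lift c d = .lam r) :
    ∃ r', p = .lam r' := by
  cases p with
  | const k => simp [Pf.lift] at h
  | bvar i => simp only [Pf.lift] at h; split at h <;> simp at h
  | lam p' => exact ⟨p', rfl⟩
  | app a b => simp [Pf.lift] at h

/-! #### Fresh variable lists and list substitutions -/

def freshList (S : Finset ℕ) (L : ℕ) : List ℕ :=
  (List.range L).map (fun i => S.sup id + 1 + i)

theorem freshList_length (S : Finset ℕ) (L : ℕ) : (freshList S L).length = L := by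
  simp [freshList]

theorem freshList_nodup (S : Finset ℕ) (L : ℕ) : (freshList S L).Nodup := by
  refine List.Nodup.map (fun a b h => by omega) (List.nodup_range (n := L))

theorem freshList_disjoint (S : Finset ℕ) (L : ℕ) :
    Disjoint (freshList S L).toFinset S := by
  rw [Finset.disjoint_left]
  intro x hx hxS
  simp only [freshList, List.mem_toFinset, List.mem_map, List.mem_range] at hx
  obtain ⟨i, _, rfl⟩ := hx
  have := Finset.le_sup (f := id) hxS
  simp only [id_eq] at this
  omega

/-- Update a substitution on a list of keys with a list of values. -/
def updL : List ℕ → List Tm → Subst → Subst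
  | k :: ks, v :: vs, σ => fun x => if x = k then v else updL ks vs σ x
  | _, _, σ => σ

theorem updL_not_mem {ks : List ℕ} {vs : List Tm} {σ : Subst} {x : ℕ} (h : x ∉ ks) :
    updL ks vs σ x = σ x := by
  induction ks generalizing vs with
  | nil => cases vs <;> rfl
  | cons k ks ih =>
    cases vs with
    | nil => rfl
    | cons v vs =>
      simp only [List.mem_cons, not_or] at h
      simp only [updL, if_neg h.1]
      exact ih h.2

theorem updL_getElem {ks : List ℕ} {vs : List Tm} {σ : Subst} (hn : ks.Nodup)
    (hl : vs.length = ks.length) {i : ℕ} (hi : i < ks.length) :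
    updL ks vs σ ks[i] = vs[i]'(by omega) := by
  induction ks generalizing vs i with
  | nil => simp at hi
  | cons k ks ih =>
    cases vs with
    | nil => simp at hl
    | cons v vs =>
      cases i with
      | zero => simp [updL]
      | succ j =>
        have hj : j < ks.length := by simpa using hi
        have hne : ks[j] ≠ k := by
          intro h
          exact (List.nodup_cons.1 hn).1 (h ▸ List.getElem_mem hj)
        simp only [List.getElem_cons_succ, updL, if_neg hne]
        exact ih (List.nodup_cons.1 hn).2 (by simpa using hl) hj

/-! #### extBody lemmas -/

theorem extBody_length {As : List Atom} {ys : List ℕ} (h : ys.length = As.length) :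
    (extBody As ys).length = As.length := by
  simp [extBody, h]

theorem extBody_append {As Bs : List Atom} {ys zs : List ℕ} (h : As.length = ys.length) :
    extBody (As ++ Bs) (ys ++ zs) = extBody As ys ++ extBody Bs zs :=
  List.zipWith_append h

theorem extBody_getElem {As : List Atom} {ys : List ℕ} (h : ys.length = As.length)
    {i : ℕ} (hi : i < As.length) :
    (extBody As ys)[i]'(by rw [extBody_length h]; exact hi)
      = (As[i]).ext (.var (ys[i]'(by omega))) := by
  simp [extBody]

/-- Substituting in a judgment (gen followed by inst). -/
theorem Derives.substJ {Ψ : Prog} {e : Pf} {As : List Atom} {B : Atom}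
    (h : Derives Ψ e (.horn As B)) (σ : Subst) :
    Derives Ψ e (.horn (As.map (Atom.subst σ)) (B.subst σ)) :=
  Derives.inst σ (Derives.gen h)

theorem Atom.subst_eq_self {σ : Subst} {A : Atom} (h : ∀ x ∈ A.fv, σ x = Tm.var x) :
    A.subst σ = A := by
  rw [Atom.subst_congr (σ' := Subst.id) h, Atom.subst_id]

theorem map_subst_eq_self {σ : Subst} {As : List Atom}
    (h : ∀ x ∈ listFV As, σ x = Tm.var x) : As.map (Atom.subst σ) = As := by
  conv_rhs => rw [← List.map_id As]
  exact List.map_congr_left (fun A hA =>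
    Atom.subst_eq_self (fun x hx => h x (mem_listFV hA hx)))

theorem extBody_eq (As : List Atom) (ys : List ℕ) :
    extBody As ys = List.zipWith Atom.ext As (ys.map Tm.var) := by
  unfold extBody
  rw [List.zipWith_map_right]

/-- The key computation: substituting an extended body. -/
theorem extBody_subst {As : List Atom} {ys : List ℕ} {vs : List Tm} {σ : Subst}
    (hys : ys.length = As.length) (hvs : vs.length = As.length)
    (h : ∀ i (hi : i < As.length), σ (ys[i]'(by omega)) = vs[i]'(by omega)) :
    (extBody As ys).map (Atom.subst σ)
      = List.zipWith Atom.ext (As.map (Atom.subst σ)) vs := by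
  apply List.ext_getElem
  · simp [extBody, hys, hvs]
  · intro i h1 h2
    have hi : i < As.length := by
      simp only [List.length_map, extBody, List.length_zipWith, hys, min_self] at h1
      exact h1
    rw [List.getElem_map, extBody_getElem hys hi, List.getElem_zipWith,
      List.getElem_map, Atom.subst_ext]
    congr 1
    show Tm.subst σ (.var (ys[i]'(by omega))) = _
    rw [Tm.subst]
    exact h i hi

theorem Pf.FVB.of_apps : ∀ {l : List Pf} {p : Pf} {k : ℕ}, Pf.FVB k (Pf.apps p l) →
    Pf.FVB k p ∧ ∀ q ∈ l, Pf.FVB k q := by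
  intro l
  induction l with
  | nil => intro p k h; exact ⟨h, by simp⟩
  | cons q qs ih =>
    intro p k h
    obtain ⟨⟨h1, h2⟩, h3⟩ := ih h
    refine ⟨h1, ?_⟩
    intro r hr
    rcases List.mem_cons.1 hr with rfl | hr
    · exact h2
    · exact h3 r hr

theorem Pf.Normal.apps_head_not_lam {p : Pf} {l : List Pf} {q : Pf}
    (h : Pf.Normal (.app (Pf.apps p l) q)) : ∀ r, p ≠ .lam r := by
  cases l with
  | nil => exact h.of_app.2.2
  | cons a as => exact (h.of_app.1).of_apps_cons

theorem pfrep_zip {fsym : ℕ → ℕ} {φ : ℕ → Tm} {l₁ : List Pf} {l₂ : List Tm}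
    (hlen : l₁.length = l₂.length)
    (h : ∀ (i : ℕ) (h1 : i < l₁.length), PfRep fsym φ (l₁[i]) (l₂[i]'(by omega))) :
    ∀ pt ∈ l₁.zip l₂, PfRep fsym φ pt.1 pt.2 := by
  intro pt hpt
  obtain ⟨i, hi, rfl⟩ := List.mem_iff_getElem.1 hpt
  have hi1 : i < l₁.length := by
    simp only [List.length_zip] at hi; omega
  rw [List.getElem_zip]
  exact h i hi1

theorem PfRep.substφ {fsym : ℕ → ℕ} {φ φ' : ℕ → Tm} {σ : Subst} {k : ℕ}
    (hφ : ∀ a < k, φ' a = (φ a).subst σ) :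
    ∀ {n : Pf} {t : Tm}, PfRep fsym φ n t → n.FVB k → PfRep fsym φ' n (t.subst σ) := by
  intro n t h
  induction h with
  | bvar a =>
    intro hb
    have ha : a < k := hb
    rw [← hφ a ha]
    exact PfRep.bvar a
  | app κ ps ts hlen h ih =>
    intro hb
    rw [Tm.subst_fn]
    refine PfRep.app κ ps (ts.map (Tm.subst σ)) (by simp [hlen]) ?_
    refine pfrep_zip (by simp [hlen]) ?_
    intro i hi
    have hmem : (ps[i], ts[i]'(by omega)) ∈ ps.zip ts := by
      have : (ps.zip ts)[i]'(by simp [List.length_zip]; omega) = (ps[i], ts[i]'(by omega)) :=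
        List.getElem_zip
      exact this ▸ List.getElem_mem _
    have hbi : Pf.FVB k (ps[i]) :=
      (Pf.FVB.of_apps hb).2 _ (List.getElem_mem hi)
    have := ih _ hmem hbi
    simpa using this

theorem mem_transProg {fsym : ℕ → ℕ} {Φ : Prog} {κ : ℕ} {body : List Atom} {head : Atom}
    (h : (κ, body, head) ∈ Φ) :
    (κ, extBody body (freshList (ruleFV body head) body.length),
      head.ext (.fn (fsym κ) ((freshList (ruleFV body head) body.length).map Tm.var)))
      ∈ transProg fsym Φ := by
  unfold transProg
  refine List.mem_map.2 ⟨(κ, body, head), h, ?_⟩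
  simp only [transRule, freshList]

theorem main_lemma (fsym : ℕ → ℕ) (Φ : Prog) :
    ∀ {e : Pf} {F : Formula}, Derives Φ e F → ∀ (As : List Atom) (B : Atom),
      (F = .horn As B ∨ F = .all As B) → Pf.Normal e →
      ∃ ys : List ℕ, ys.length = As.length ∧ ys.Nodup ∧
        Disjoint ys.toFinset (ruleFV As B) ∧
        ∃ t : Tm,
          ((∃ κ, e = .const κ ∧ t = .fn (fsym κ) (ys.map Tm.var)) ∨
            (∃ n : Pf, e = Pf.lams As.length n ∧ n.FirstOrder ∧ n.FVB As.length ∧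
              PfRep fsym (mkPhi ys) n t)) ∧
          Derives (transProg fsym Φ) e (.horn (extBody As ys) (B.ext t)) := by
  intro e F h
  induction h with
  | @ax κ body head hmem =>
    intro As B hF _
    rcases hF with hF | hF
    · cases hF
    injection hF with h1 h2
    subst h1; subst h2
    refine ⟨freshList (ruleFV body head) body.length, freshList_length _ _, freshList_nodup _ _,
      freshList_disjoint _ _, .fn (fsym κ) ((freshList (ruleFV body head) body.length).map Tm.var),
      Or.inl ⟨κ, rfl, rfl⟩, ?_⟩
    have h1 := Derives.inst Subst.id (Derives.ax (mem_transProg (fsym := fsym) hmem))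
    rwa [map_subst_eq_self (σ := Subst.id) (fun x _ => rfl), Atom.subst_id] at h1
  | @gen e body head h ih =>
    intro As B hF hn
    rcases hF with hF | hF
    · cases hF
    injection hF with h1 h2
    subst h1; subst h2
    exact ih body head (Or.inl rfl) hn
  | @inst e body head σ h ih =>
    intro As B hF hn
    rcases hF with hF | hF
    swap
    · cases hF
    injection hF with h1 h2
    subst h1; subst h2
    obtain ⟨ys, hlen, hnd, hdj, t, hdisc, hder⟩ := ih body head (Or.inr rfl) hn
    set L := body.length with hL
    set As' := body.map (Atom.subst σ) with hAs'
    set B' := head.subst σ with hB'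
    set ys' := freshList (ruleFV As' B') L with hys'
    have hlen' : ys'.length = L := freshList_length _ _
    set σ' := updL ys ((ys'.map Tm.var)) σ with hσ'
    have hupd : ∀ (i : ℕ) (hi : i < ys.length), σ' (ys[i]) = Tm.var (ys'[i]'(by omega)) := by
      intro i hi
      rw [hσ', updL_getElem hnd (by simp [hlen', hlen]) hi]
      simp
    have hout : ∀ x ∈ ruleFV body head, σ' x = σ x := by
      intro x hx
      refine updL_not_mem (fun hmem => ?_)
      exact (Finset.disjoint_left.1 hdj) (List.mem_toFinset.2 hmem) hx
    have hbodyeq : body.map (Atom.subst σ') = body.map (Atom.subst σ) :=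
      List.map_congr_left (fun A hA => Atom.subst_congr (fun x hx =>
        hout x (by unfold ruleFV; exact Finset.mem_union_left _ (mem_listFV hA hx))))
    have hheadeq : head.subst σ' = head.subst σ :=
      Atom.subst_congr (fun x hx =>
        hout x (by unfold ruleFV; exact Finset.mem_union_right _ hx))
    have hmapped : (extBody body ys).map (Atom.subst σ') = extBody As' ys' := by
      rw [extBody_subst (vs := ys'.map Tm.var) hlen
        (by simp only [List.length_map]; omega) (fun i hi => by
        simp only [List.getElem_map]; exact hupd i (by omega)), hbodyeq, ← hAs',
        ← extBody_eq]
    have hder' := hder.substJ σ'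
    rw [hmapped, Atom.subst_ext, hheadeq] at hder'
    refine ⟨ys', by rw [hAs', List.length_map, ← hL]; exact hlen', freshList_nodup _ _,
      freshList_disjoint _ _, t.subst σ', ?_, hder'⟩
    rcases hdisc with ⟨κ, rfl, rfl⟩ | ⟨n, he, hfo, hfvb, hrep⟩
    · left
      refine ⟨κ, rfl, ?_⟩
      rw [Tm.subst_fn]
      congr 1
      apply List.ext_getElem (by simp [hlen, hlen'])
      intro i h1 h2
      simp only [List.getElem_map]
      show Tm.subst σ' (.var (ys[i]'(by simpa using h1))) = _
      rw [Tm.subst]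
      exact hupd i (by simpa using h1)
    · right
      have hAs'len : As'.length = L := by simp [hAs', hL]
      refine ⟨n, by rw [hAs'len]; exact he, hfo, by rw [hAs'len]; exact hfvb, ?_⟩
      refine PfRep.substφ (σ := σ') (k := L) ?_ hrep hfvb
      intro a ha
      have hlys : ys.length = L := hlen
      simp only [mkPhi, hlys, hlen']
      rw [List.getD_eq_getElem _ _ (show L - 1 - a < ys'.length by omega),
          List.getD_eq_getElem _ _ (show L - 1 - a < ys.length by omega),
          Tm.subst, hupd _ (by omega)]
  | @cut e₁ e₂ As Bs D C h₁ h₂ ih₁ ih₂ =>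
    intro As' B' hF hn
    rcases hF with hF | hF
    swap
    · cases hF
    injection hF with h1 h2
    subst h1; subst h2
    set nA := As.length with hnA
    set nB := Bs.length with hnB
    set bs := (List.range nB).map (fun j => Pf.bvar (nB - 1 - j)) with hbs
    set as := (List.range nA).map (fun j => Pf.bvar (nA + nB - 1 - j)) with has
    have hb : Pf.Normal (.app (Pf.apps (e₂.lift 0 (nA+nB)) bs)
        (Pf.apps (e₁.lift 0 (nA+nB)) as)) := Pf.Normal.of_lams (k := nA+nB) hn
    have hX := hb.of_app.1
    have hY := hb.of_app.2.1
    have hn₂ : Pf.Normal e₂ := (hX.of_apps).of_lift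
    have hn₁ : Pf.Normal e₁ := (hY.of_apps).of_lift
    have hnotlam₂ : ∀ r, e₂ ≠ .lam r := by
      intro r hr
      exact hb.apps_head_not_lam _ (by rw [hr]; rfl)
    obtain ⟨ys₁, hl₁, hnd₁, hdj₁, t₁, hd₁, hder₁⟩ := ih₁ As D (Or.inl rfl) hn₁
    obtain ⟨ys₂, hl₂, hnd₂, hdj₂, t₂, hd₂, hder₂⟩ := ih₂ (Bs ++ [D]) C (Or.inl rfl) hn₂
    have hl₂' : ys₂.length = nB + 1 := by simpa using hl₂
    obtain ⟨κ₂, rfl, ht₂⟩ : ∃ κ₂, e₂ = .const κ₂ ∧ t₂ = .fn (fsym κ₂) (ys₂.map Tm.var) := by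
      rcases hd₂ with ⟨κ₂, he, ht⟩ | ⟨n₂, he, _, _, _⟩
      · exact ⟨κ₂, he, ht⟩
      · exfalso
        rw [show (Bs ++ [D]).length = nB + 1 by simp [hnB]] at he
        exact hnotlam₂ (Pf.lams nB n₂) he
    set ys := freshList (ruleFV (As ++ Bs) C) (nA + nB) with hys
    have hyslen : ys.length = nA + nB := freshList_length _ _
    set ya := ys.take nA with hya
    set yb := ys.drop nA with hyb
    have hyayb : ya ++ yb = ys := List.take_append_drop _ _
    have hyal : ya.length = nA := by rw [hya, List.length_take]; omega
    have hybl : yb.length = nB := by rw [hyb, List.length_drop]; omega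
    -- step A
    set σ₁ := updL ys₁ (ya.map Tm.var) Subst.id with hσ₁
    have hupd₁ : ∀ (i : ℕ) (hi : i < ys₁.length), σ₁ ys₁[i] = Tm.var (ya[i]'(by omega)) := by
      intro i hi
      rw [hσ₁, updL_getElem hnd₁ (by simp [hyal]; omega) hi]
      simp
    have hout₁ : ∀ x ∈ ruleFV As D, σ₁ x = Tm.var x := by
      intro x hx
      exact updL_not_mem (fun hm => (Finset.disjoint_left.1 hdj₁) (List.mem_toFinset.2 hm) hx)
    set t₁' := t₁.subst σ₁ with ht₁'
    have hstepA : Derives (transProg fsym Φ) e₁ (.horn (extBody As ya) (D.ext t₁')) := by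
      have h' := hder₁.substJ σ₁
      have hmap : (extBody As ys₁).map (Atom.subst σ₁) = extBody As ya := by
        rw [extBody_subst (vs := ya.map Tm.var) hl₁
          (by simp only [List.length_map]; omega) (fun i hi => by
          simp only [List.getElem_map]; exact hupd₁ i (by omega)),
          map_subst_eq_self (fun x hx => hout₁ x (by
            unfold ruleFV; exact Finset.mem_union_left _ hx)), ← extBody_eq]
      rw [hmap, Atom.subst_ext, Atom.subst_eq_self (fun x hx => hout₁ x (by
        unfold ruleFV; exact Finset.mem_union_right _ hx))] at h'
      exact h'
    -- step B
    set vs₂ := yb.map Tm.var ++ [t₁'] with hvs₂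
    have hvs₂l : vs₂.length = nB + 1 := by simp [hvs₂, hybl]
    set σ₂ := updL ys₂ vs₂ Subst.id with hσ₂
    have hupd₂ : ∀ (i : ℕ) (hi : i < ys₂.length), σ₂ ys₂[i] = vs₂[i]'(by omega) := by
      intro i hi
      rw [hσ₂, updL_getElem hnd₂ (by omega) hi]
    have hout₂ : ∀ x ∈ ruleFV (Bs ++ [D]) C, σ₂ x = Tm.var x := by
      intro x hx
      exact updL_not_mem (fun hm => (Finset.disjoint_left.1 hdj₂) (List.mem_toFinset.2 hm) hx)
    set t₂' := t₂.subst σ₂ with ht₂'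
    have ht₂'eq : t₂' = .fn (fsym κ₂) vs₂ := by
      rw [ht₂', ht₂, Tm.subst_fn]
      congr 1
      apply List.ext_getElem (by simp [hl₂', hvs₂l])
      intro i hh1 hh2
      simp only [List.getElem_map]
      show Tm.subst σ₂ (.var (ys₂[i]'(by simpa using hh1))) = _
      rw [Tm.subst]
      exact hupd₂ i (by simpa using hh1)
    have hstepB : Derives (transProg fsym Φ) (.const κ₂)
        (.horn (extBody Bs yb ++ [D.ext t₁']) (C.ext t₂')) := by
      have h' := hder₂.substJ σ₂
      have hmap : (extBody (Bs ++ [D]) ys₂).map (Atom.subst σ₂)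
          = extBody Bs yb ++ [D.ext t₁'] := by
        rw [extBody_subst (vs := vs₂) hl₂
          (by simp only [hvs₂l, List.length_append, List.length_singleton, hnB]) (fun i hi => hupd₂ i (by omega)),
          map_subst_eq_self (fun x hx => hout₂ x (by
            unfold ruleFV; exact Finset.mem_union_left _ hx)), hvs₂,
          List.zipWith_append (f := Atom.ext) (l₁ := Bs) (l₁' := [D]) (l₂ := List.map Tm.var yb) (l₂' := [t₁']) (by simp [hybl, hnB]), ← extBody_eq]
        rfl
      rw [hmap, Atom.subst_ext, Atom.subst_eq_self (fun x hx => hout₂ x (by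
        unfold ruleFV; exact Finset.mem_union_right _ hx))] at h'
      exact h'
    -- cut
    have hcut := Derives.cut hstepA hstepB
    rw [extBody_length hyal, extBody_length hybl, ← extBody_append hyal.symm, hyayb] at hcut
    -- index computations
    have hmk : ∀ j, ∀ _ : j < nA + nB,
        mkPhi ys j = Tm.var (ys[nA + nB - 1 - j]'(by rw [hyslen]; omega)) := by
      intro j hj
      simp only [mkPhi, hyslen]
      rw [List.getD_eq_getElem _ _ (by rw [hyslen]; omega)]
    have hgetya : ∀ (i : ℕ) (hi : i < nA),
        ys[i]'(by rw [hyslen]; omega) = ya[i]'(by rw [hyal]; omega) := by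
      intro i hi
      exact (List.getElem_take (xs := ys)).symm
    have hgetyb : ∀ (i : ℕ) (hi : i < nB),
        ys[nA + i]'(by rw [hyslen]; omega) = yb[i]'(by rw [hybl]; omega) := by
      intro i hi
      exact (List.getElem_drop (xs := ys)).symm
    set Yt := Pf.apps (e₁.lift 0 (nA + nB)) as with hYt
    -- facts about the first argument list bs
    have hbsfo : ∀ q ∈ bs, q.FirstOrder := by
      intro q hq
      obtain ⟨j, _, rfl⟩ := List.mem_map.1 (hbs ▸ hq)
      exact .bvar _
    have hbsfvb : ∀ q ∈ bs, Pf.FVB (nA + nB) q := by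
      intro q hq
      obtain ⟨j, hj, rfl⟩ := List.mem_map.1 (hbs ▸ hq)
      simp only [List.mem_range] at hj
      show nB - 1 - j < nA + nB
      omega
    -- facts about Yt
    have hYtfacts : Yt.FirstOrder ∧ Pf.FVB (nA + nB) Yt ∧ PfRep fsym (mkPhi ys) Yt t₁' := by
      have hasfo : ∀ q ∈ as, q.FirstOrder := by
        intro q hq
        obtain ⟨j, _, rfl⟩ := List.mem_map.1 (has ▸ hq)
        exact .bvar _
      have hasfvb : ∀ q ∈ as, Pf.FVB (nA + nB) q := by
        intro q hq
        obtain ⟨j, hj, rfl⟩ := List.mem_map.1 (has ▸ hq)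
        simp only [List.mem_range] at hj
        show nA + nB - 1 - j < nA + nB
        omega
      rcases hd₁ with ⟨κ₁, rfl, ht₁⟩ | ⟨n₁, he₁, hfo₁, hfvb₁, hrep₁⟩
      · have hYteq : Yt = Pf.apps (.const κ₁) as := hYt
        have ht₁'eq : t₁' = .fn (fsym κ₁) (ya.map Tm.var) := by
          rw [ht₁', ht₁, Tm.subst_fn]
          congr 1
          apply List.ext_getElem (by simp [hl₁, hyal, hnA])
          intro i hh1 hh2
          simp only [List.getElem_map]
          show Tm.subst σ₁ (.var (ys₁[i]'(by simpa using hh1))) = _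
          rw [Tm.subst]
          exact hupd₁ i (by simpa using hh1)
        refine ⟨hYteq ▸ Pf.FirstOrder.apps (.const κ₁) hasfo,
          hYteq ▸ Pf.FVB.apps trivial hasfvb, ?_⟩
        rw [hYteq, ht₁'eq]
        refine PfRep.app κ₁ as (ya.map Tm.var) (by simp [has, hyal]) ?_
        refine pfrep_zip (by simp [has, hyal]) ?_
        intro i hi
        have hi' : i < nA := by simpa [has] using hi
        have hh1 : as[i]'hi = Pf.bvar (nA + nB - 1 - i) := by simp [has]
        have hh2 : (ya.map Tm.var)[i]'(by rw [List.length_map, hyal]; omega) = Tm.var (ya[i]'(by rw [hyal]; omega)) := by simp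
        rw [hh1, hh2]
        have hv : Tm.var (ya[i]'(by omega)) = mkPhi ys (nA + nB - 1 - i) := by
          rw [hmk _ (by omega)]
          congr 1
          simp only [show nA + nB - 1 - (nA + nB - 1 - i) = i from by omega]
          exact (hgetya i hi').symm
        rw [hv]
        exact PfRep.bvar _
      · by_cases hA0 : nA = 0
        · have hAs0 : As.length = 0 := hA0
          have he₁' : e₁ = n₁ := by rw [he₁, hAs0]; rfl
          have hfvb0 : n₁.FVB 0 := by rw [hAs0] at hfvb₁; exact hfvb₁
          have hys₁nil : ys₁ = [] := List.length_eq_zero_iff.1 (by rw [hl₁, hAs0])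
          have ht₁id : t₁' = t₁ := by
            rw [ht₁', hσ₁, hys₁nil]
            exact Tm.subst_id t₁
          have hasnil : as = [] := by simp [has, hA0]
          have hYteq : Yt = n₁ := by
            rw [hYt, hasnil, he₁']
            show n₁.lift 0 (nA + nB) = n₁
            exact Pf.lift_eq_of_FVB hfvb0 _
          refine ⟨hYteq ▸ hfo₁, hYteq ▸ hfvb0.mono (Nat.zero_le _), ?_⟩
          rw [hYteq, ht₁id]
          have hh := PfRep.substφ (φ := mkPhi ys₁) (φ' := mkPhi ys) (σ := Subst.id) (k := 0)
            (fun a ha => absurd ha (Nat.not_lt_zero a)) hrep₁ hfvb0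
          rwa [Tm.subst_id] at hh
        · exfalso
          have helam : e₁ = .lam (Pf.lams (nA - 1) n₁) := by
            rw [he₁]
            show Pf.lams nA n₁ = _
            rw [show nA = (nA - 1) + 1 from by omega]
            rfl
          have hasne : as ≠ [] := by
            intro hnil
            have hlas : as.length = nA := by simp [has]
            rw [hnil] at hlas
            simp at hlas
            omega
          obtain ⟨a, as', hcas⟩ := List.exists_cons_of_ne_nil hasne
          rw [hYt, hcas] at hY
          refine hY.of_apps_cons ((Pf.lams (nA - 1) n₁).lift 1 (nA + nB)) ?_
          rw [helam]
          rfl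
    -- assemble
    refine ⟨ys, by rw [List.length_append]; exact hyslen, freshList_nodup _ _,
      freshList_disjoint _ _, t₂', Or.inr ?_, hcut⟩
    refine ⟨.app (Pf.apps (.const κ₂) bs) Yt, ?_, ?_, ?_, ?_⟩
    · rw [List.length_append]
      rfl
    · exact (Pf.FirstOrder.apps (.const κ₂) hbsfo).app hYtfacts.1
    · rw [List.length_append]
      exact ⟨Pf.FVB.apps trivial hbsfvb, hYtfacts.2.1⟩
    · rw [ht₂'eq]
      rw [show Pf.app (Pf.apps (.const κ₂) bs) Yt = Pf.apps (.const κ₂) (bs ++ [Yt]) from by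
        rw [Pf.apps_append]; rfl]
      refine PfRep.app κ₂ (bs ++ [Yt]) vs₂ (by simp [hbs, hvs₂, hybl]) ?_
      refine pfrep_zip (by simp [hbs, hvs₂, hybl]) ?_
      intro i hi
      have hi' : i < nB + 1 := by simpa [hbs] using hi
      rcases lt_or_ge i nB with hilt | hige
      · have hh1 : (bs ++ [Yt])[i]'hi = Pf.bvar (nB - 1 - i) := by
          rw [List.getElem_append_left (by simp [hbs]; omega)]
          simp [hbs]
        have hh2 : vs₂[i]'(by omega) = Tm.var (yb[i]'(by omega)) := by
          show (List.map Tm.var yb ++ [t₁'])[i]'(by simp [hybl]; omega) = _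
          rw [List.getElem_append_left (by simp [hybl]; omega)]
          simp
        rw [hh1, hh2]
        have hv : Tm.var (yb[i]'(by omega)) = mkPhi ys (nB - 1 - i) := by
          rw [hmk _ (by omega)]
          congr 1
          simp only [show nA + nB - 1 - (nB - 1 - i) = nA + i from by omega]
          exact (hgetyb i hilt).symm
        rw [hv]
        exact PfRep.bvar _
      · have hieq : i = nB := by omega
        subst hieq
        have hh1 : (bs ++ [Yt])[nB]'hi = Yt := by
          rw [List.getElem_append_right (by simp [hbs])]
          simp [hbs]
        have hh2 : vs₂[nB]'(by omega) = t₁' := by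
          show (List.map Tm.var yb ++ [t₁'])[nB]'(by simp [hybl]) = _
          rw [List.getElem_append_right (by simp [hybl])]
          simp [hybl]
        rw [hh1, hh2]
        exact hYtfacts.2.2
/-- The realizability transformation preserves provability: if
`e : [∀x̄.] A1,...,Am ⇒ B` is derivable from `Φ` with `e` β-normal, then for fresh
distinct variables `y1,...,ym` the transformed judgment
`e : [∀x̄∀ȳ.] A1[y1],...,Am[ym] ⇒ B[t]` is derivable from `F(Φ)`, where
`t = f_κ(y1,...,ym)` if `e = κ` and `t = ⟦n⟧_{[ȳ/ā]}` if `e = λā.n`. -/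
theorem realizability_preserves_typing (fsym : ℕ → ℕ) (Φ : Prog)
    (hf : FreshSyms fsym Φ) (e : Pf) (As : List Atom) (B : Atom)
    (hnorm : Pf.Normal e)
    (h : Derives Φ e (.horn As B) ∨ Derives Φ e (.all As B)) :
    ∃ ys : List ℕ, ys.length = As.length ∧ ys.Nodup ∧
      Disjoint ys.toFinset (ruleFV As B) ∧
      ∃ t : Tm,
        ((∃ κ, e = .const κ ∧ t = .fn (fsym κ) (ys.map Tm.var)) ∨
          (∃ n : Pf, e = Pf.lams As.length n ∧ n.FirstOrder ∧
            PfRep fsym (mkPhi ys) n t)) ∧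
        (Derives Φ e (.horn As B) →
          Derives (transProg fsym Φ) e (.horn (extBody As ys) (B.ext t))) ∧
        (Derives Φ e (.all As B) →
          Derives (transProg fsym Φ) e (.all (extBody As ys) (B.ext t))) := by
  rcases h with hd | hd
  · obtain ⟨ys, hlen, hnd, hdj, t, hdisc, hder⟩ :=
      main_lemma fsym Φ hd As B (Or.inl rfl) hnorm
    refine ⟨ys, hlen, hnd, hdj, t, ?_, fun _ => hder, fun _ => Derives.gen hder⟩
    rcases hdisc with h | ⟨n, h1, h2, _, h4⟩
    · exact Or.inl h
    · exact Or.inr ⟨n, h1, h2, h4⟩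
  · obtain ⟨ys, hlen, hnd, hdj, t, hdisc, hder⟩ :=
      main_lemma fsym Φ hd As B (Or.inr rfl) hnorm
    refine ⟨ys, hlen, hnd, hdj, t, ?_, fun _ => hder, fun _ => Derives.gen hder⟩
    rcases hdisc with h | ⟨n, h1, h2, _, h4⟩
    · exact Or.inl h
    · exact Or.inr ⟨n, h1, h2, h4⟩

end SRes
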